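/- The function f₀(x) = e^{−x} on ℝ₊ majorizes f_d(x) = (1/2) x² e^{−x} on ℝ₊ in the continuous sense. -/

import Mathlib

open MeasureTheory Set Real

/-- Antiderivative of `x ↦ x * exp (-x)`. -/
lemma aux_hasDerivAt_xexp (s : ℝ) :
    HasDerivAt (fun s : ℝ => -(s + 1) * exp (-s)) (s * exp (-s)) s := by
  have h1 : HasDerivAt (fun s : ℝ => -(s + 1)) (-1) s := by
    exact ((hasDerivAt_id s).add_const 1).neg
  have h2 : HasDerivAt (fun s : ℝ => exp (-s)) (-exp (-s)) s := by
    have := (Real.hasDerivAt_exp (-s)).comp s ((hasDerivAt_id s).neg)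
    simp at this
    exact this
  refine (h1.mul h2).congr_deriv ?_
  ring

/-- Antiderivative of `x ↦ (1/2) x² exp (-x)`. -/
lemma aux_hasDerivAt_x2exp (x : ℝ) :
    HasDerivAt (fun x : ℝ => -(x^2/2 + x + 1) * exp (-x)) ((1/2) * x^2 * exp (-x)) x := by
  have h1 : HasDerivAt (fun x : ℝ => -(x^2/2 + x + 1)) (-(x + 1)) x := by
    have := (((hasDerivAt_pow 2 x).div_const 2).add (hasDerivAt_id x)).add_const 1
    exact this.neg.congr_deriv (by rw [show (2:ℕ) - 1 = 1 from rfl]; push_cast; ring)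
  have h2 : HasDerivAt (fun x : ℝ => exp (-x)) (-exp (-x)) x := by
    have := (Real.hasDerivAt_exp (-x)).comp x ((hasDerivAt_id x).neg)
    simp at this
    exact this
  refine (h1.mul h2).congr_deriv ?_
  ring

lemma aux_tendsto_xexp :
    Filter.Tendsto (fun s : ℝ => -(s + 1) * exp (-s)) Filter.atTop (nhds 0) := by
  have h1 := Real.tendsto_pow_mul_exp_neg_atTop_nhds_zero 1
  have h0 := Real.tendsto_pow_mul_exp_neg_atTop_nhds_zero 0
  have := (h1.add h0).neg
  simp only [pow_one, pow_zero, one_mul, neg_zero, add_zero, neg_add] at this ⊢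
  convert this using 2 with s
  ring

lemma aux_tendsto_x2exp :
    Filter.Tendsto (fun x : ℝ => -(x^2/2 + x + 1) * exp (-x)) Filter.atTop (nhds 0) := by
  have h2 := (Real.tendsto_pow_mul_exp_neg_atTop_nhds_zero 2).div_const 2
  have h1 := Real.tendsto_pow_mul_exp_neg_atTop_nhds_zero 1
  have h0 := Real.tendsto_pow_mul_exp_neg_atTop_nhds_zero 0
  have := ((h2.add h1).add h0).neg
  simp only [pow_one, pow_zero, one_mul, zero_div, neg_zero, add_zero, zero_add] at this ⊢
  convert this using 2 with x
  ring

lemma aux_integral_xexp : ∫ s in Ioi (0:ℝ), s * exp (-s) = 1 := by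
  have := integral_Ioi_of_hasDerivAt_of_nonneg
    (g := fun s : ℝ => -(s + 1) * exp (-s)) (g' := fun s : ℝ => s * exp (-s)) (a := 0)
    (l := 0)
    (((continuous_id.add continuous_const).neg.mul
      (continuous_exp.comp continuous_neg)).continuousWithinAt)
    (fun x _ => aux_hasDerivAt_xexp x)
    (fun x hx => mul_nonneg (le_of_lt hx) (exp_pos _).le) aux_tendsto_xexp
  simpa using this

lemma aux_integrableOn_xexp : IntegrableOn (fun s : ℝ => s * exp (-s)) (Ici (0:ℝ)) := by
  rw [integrableOn_Ici_iff_integrableOn_Ioi]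
  exact integrableOn_Ioi_deriv_of_nonneg
    (((continuous_id.add continuous_const).neg.mul
      (continuous_exp.comp continuous_neg)).continuousWithinAt)
    (fun x _ => aux_hasDerivAt_xexp x)
    (fun x hx => mul_nonneg (le_of_lt hx) (exp_pos _).le) aux_tendsto_xexp

lemma aux_integral_x2exp : ∫ x in Ioi (0:ℝ), (1/2) * x^2 * exp (-x) = 1 := by
  have := integral_Ioi_of_hasDerivAt_of_nonneg
    (g := fun x : ℝ => -(x^2/2 + x + 1) * exp (-x)) (g' := fun x : ℝ => (1/2) * x^2 * exp (-x))
    (a := 0) (l := 0)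
    (((((continuous_pow 2).div_const 2).add continuous_id).add
      continuous_const).neg.mul (continuous_exp.comp continuous_neg)).continuousWithinAt
    (fun x _ => aux_hasDerivAt_x2exp x)
    (fun x hx => by positivity) aux_tendsto_x2exp
  simpa using this

/-- The finite-interval integral needed in the pointwise bound. -/
lemma aux_interval (t x : ℝ) (hx : 0 ≤ x) :
    ∫ s in (0:ℝ)..x, s * exp (-s) * (exp (-(x - s)) - t)
      = (1/2) * x^2 * exp (-x) + t * (x + 1) * exp (-x) - t := by
  have key : ∀ s : ℝ, HasDerivAt (fun s : ℝ => s^2/2 * exp (-x) + t * ((s+1) * exp (-s)))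
      (s * exp (-s) * (exp (-(x - s)) - t)) s := by
    intro s
    have h1 : HasDerivAt (fun s : ℝ => s^2/2 * exp (-x)) (s * exp (-x)) s := by
      have := ((hasDerivAt_pow 2 s).div_const 2).mul_const (exp (-x))
      exact this.congr_deriv (by rw [show (2:ℕ) - 1 = 1 from rfl]; push_cast; ring)
    have h2 : HasDerivAt (fun s : ℝ => t * ((s+1) * exp (-s))) (t * (-(s * exp (-s)))) s := by
      have := (aux_hasDerivAt_xexp s).neg
      simp only [Pi.neg_def, neg_neg, neg_mul] at this
      exact this.const_mul t
    have := h1.add h2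
    refine this.congr_deriv ?_
    have h3 : exp (-s) * exp (-(x - s)) = exp (-x) := by
      rw [← Real.exp_add]; ring_nf
    linear_combination (-s) * h3
  rw [intervalIntegral.integral_eq_sub_of_hasDerivAt (fun s _ => key s) (by
    apply Continuous.intervalIntegrable
    fun_prop)]
  simp [Real.exp_zero]
  ring

/-- Pointwise bound (Jensen step). -/
lemma aux_pointwise (t x : ℝ) (ht : 0 ≤ t) (hx : 0 ≤ x) :
    max ((1/2) * x^2 * exp (-x) - t) 0
      ≤ ∫ s in Ioc (0:ℝ) x, s * exp (-s) * max (exp (-(x - s)) - t) 0 := by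
  have hint1 : IntegrableOn (fun s : ℝ => s * exp (-s) * (exp (-(x - s)) - t)) (Ioc 0 x) := by
    apply Continuous.integrableOn_Ioc; fun_prop
  have hint2 : IntegrableOn (fun s : ℝ => s * exp (-s) * max (exp (-(x - s)) - t) 0) (Ioc 0 x) := by
    apply Continuous.integrableOn_Ioc
    exact (continuous_id.mul (continuous_exp.comp continuous_neg)).mul
      (((continuous_exp.comp (continuous_const.sub continuous_id).neg).sub continuous_const).max
        continuous_const)
  apply max_le
  · calc (1/2) * x^2 * exp (-x) - t
        ≤ (1/2) * x^2 * exp (-x) + t * (x + 1) * exp (-x) - t := by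
          have h := mul_nonneg (mul_nonneg ht (by linarith : (0:ℝ) ≤ x + 1)) (exp_pos (-x)).le
          linarith
      _ = ∫ s in Ioc (0:ℝ) x, s * exp (-s) * (exp (-(x - s)) - t) := by
          rw [← intervalIntegral.integral_of_le hx, aux_interval t x hx]
      _ ≤ ∫ s in Ioc (0:ℝ) x, s * exp (-s) * max (exp (-(x - s)) - t) 0 := by
          apply setIntegral_mono_on hint1 hint2 measurableSet_Ioc
          intro s hs
          have hs0 : 0 ≤ s := le_of_lt hs.1
          have : exp (-(x - s)) - t ≤ max (exp (-(x - s)) - t) 0 := le_max_left _ _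
          have hnn : 0 ≤ s * exp (-s) := by positivity
          exact mul_le_mul_of_nonneg_left this hnn
  · apply setIntegral_nonneg measurableSet_Ioc
    intro s hs
    have hs0 : 0 ≤ s := le_of_lt hs.1
    have : (0:ℝ) ≤ max (exp (-(x - s)) - t) 0 := le_max_right _ _
    positivity

/-- `f₀(x) = e^{−x}` majorizes `f_d(x) = (1/2) x² e^{−x}` on ℝ₊. -/
theorem f0_majorizes_fd :
    (∀ t : ℝ, 0 ≤ t →
      ∫ x in Ici (0:ℝ), max ((1/2) * x^2 * exp (-x) - t) 0 ≤
        ∫ x in Ici (0:ℝ), max (exp (-x) - t) 0) ∧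
    ∫ x in Ici (0:ℝ), (1/2) * x^2 * exp (-x) = ∫ x in Ici (0:ℝ), exp (-x) := by
  constructor
  · intro t ht
    -- notation
    set w : ℝ → ENNReal := fun s => (Ici (0:ℝ)).indicator (fun s => ENNReal.ofReal (s * exp (-s))) s with hw
    set v : ℝ → ENNReal := fun y => (Ici (0:ℝ)).indicator (fun y => ENNReal.ofReal (max (exp (-y) - t) 0)) y with hv
    have wmeas : Measurable w := by
      apply Measurable.indicator _ measurableSet_Ici
      exact (measurable_id.mul (Real.measurable_exp.comp measurable_neg)).ennreal_ofReal
    have vmeas : Measurable v := by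
      apply Measurable.indicator _ measurableSet_Ici
      exact (((Real.measurable_exp.comp measurable_neg).sub measurable_const).max measurable_const).ennreal_ofReal
    -- step 1: pointwise comparison in ℝ≥0∞
    have step1 : ∀ x : ℝ, 0 ≤ x →
        ENNReal.ofReal (max ((1/2) * x^2 * exp (-x) - t) 0) ≤ ∫⁻ s, w s * v (x - s) := by
      intro x hx
      have hker : (fun s : ℝ => w s * v (x - s))
          = (Ioc (0:ℝ) x).indicator (fun s => ENNReal.ofReal (s * exp (-s) * max (exp (-(x - s)) - t) 0)) := by
        funext s
        by_cases h1 : s ∈ Ioc (0:ℝ) x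
        · have hs0 : (0:ℝ) ≤ s := le_of_lt h1.1
          have hxs : (0:ℝ) ≤ x - s := by linarith [h1.2]
          simp only [hw, hv, indicator_of_mem (mem_Ici.mpr hs0), indicator_of_mem (mem_Ici.mpr hxs),
            indicator_of_mem h1]
          rw [← ENNReal.ofReal_mul (by positivity)]
        · rw [indicator_of_notMem h1]
          rcases lt_or_ge s 0 with hs | hs
          · simp [hw, hv, indicator_of_notMem (fun hh => absurd (mem_Ici.mp hh) (not_le.mpr hs))]
          · rcases eq_or_lt_of_le hs with hs0 | hs0
            · simp [hw, hv, ← hs0]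
            · have hxs : x - s < 0 := by
                have hlt : x < s := by
                  by_contra hcon
                  exact h1 ⟨hs0, le_of_not_gt hcon⟩
                linarith
              simp [hw, hv, indicator_of_notMem (fun hh => absurd (mem_Ici.mp hh) (not_le.mpr hxs))]
      rw [hker, lintegral_indicator measurableSet_Ioc]
      have hint : IntegrableOn (fun s : ℝ => s * exp (-s) * max (exp (-(x - s)) - t) 0) (Ioc 0 x) := by
        apply Continuous.integrableOn_Ioc
        exact (continuous_id.mul (continuous_exp.comp continuous_neg)).mul
          (((continuous_exp.comp (continuous_const.sub continuous_id).neg).sub continuous_const).max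
            continuous_const)
      rw [← ofReal_integral_eq_lintegral_ofReal hint]
      · exact ENNReal.ofReal_le_ofReal (aux_pointwise t x ht hx)
      · filter_upwards [ae_restrict_mem measurableSet_Ioc] with s hs
        have hs0 : 0 ≤ s := le_of_lt hs.1
        have h0 : (0:ℝ) ≤ max (exp (-(x - s)) - t) 0 := le_max_right _ _
        exact mul_nonneg (mul_nonneg hs0 (exp_pos _).le) h0
    -- step 2: the chain of lintegral (in)equalities
    have swap : ∫⁻ x, ∫⁻ s, w s * v (x - s) = (∫⁻ s, w s) * ∫⁻ y, v y := by
      rw [lintegral_lintegral_swap]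
      · have : ∀ s : ℝ, ∫⁻ x, w s * v (x - s) = w s * ∫⁻ y, v y := by
          intro s
          rw [lintegral_const_mul' _ _ (by
            simp only [hw]
            exact ne_top_of_le_ne_top ENNReal.ofReal_ne_top (indicator_le_self' (fun _ _ => zero_le) s))]
          congr 1
          exact lintegral_sub_right_eq_self v s
        simp_rw [this]
        rw [lintegral_mul_const'' _ wmeas.aemeasurable]
      · exact ((wmeas.comp measurable_snd).mul
          (vmeas.comp (measurable_fst.sub measurable_snd))).aemeasurable
    have hwint : ∫⁻ s, w s = 1 := by
      have hnn : 0 ≤ᵐ[volume.restrict (Ici (0:ℝ))] fun s : ℝ => s * exp (-s) := by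
        filter_upwards [ae_restrict_mem measurableSet_Ici] with s hs
        exact mul_nonneg hs (exp_pos _).le
      rw [hw, lintegral_indicator measurableSet_Ici,
        ← ofReal_integral_eq_lintegral_ofReal aux_integrableOn_xexp hnn,
        integral_Ici_eq_integral_Ioi, aux_integral_xexp, ENNReal.ofReal_one]
    have hRint : IntegrableOn (fun y : ℝ => max (exp (-y) - t) 0) (Ici (0:ℝ)) := by
      have hexp : IntegrableOn (fun y : ℝ => exp (-y)) (Ici (0:ℝ)) := by
        rw [integrableOn_Ici_iff_integrableOn_Ioi]
        simpa using exp_neg_integrableOn_Ioi 0 (by norm_num : (0:ℝ) < 1)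
      apply Integrable.mono hexp
      · exact (((continuous_exp.comp continuous_neg).sub continuous_const).max
          continuous_const).aestronglyMeasurable.restrict
      · filter_upwards [ae_restrict_mem measurableSet_Ici] with y _
        rw [Real.norm_eq_abs, Real.norm_eq_abs, abs_of_nonneg (le_max_right _ _),
          abs_of_nonneg (le_of_lt (exp_pos _))]
        apply max_le _ (le_of_lt (exp_pos _))
        linarith
    have hvint : ∫⁻ y, v y = ENNReal.ofReal (∫ y in Ici (0:ℝ), max (exp (-y) - t) 0) := by
      rw [hv, lintegral_indicator measurableSet_Ici,
        ← ofReal_integral_eq_lintegral_ofReal hRint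
          (by filter_upwards with y; exact le_max_right _ _)]
    -- combine
    have hL : ∫⁻ x in Ici (0:ℝ), ENNReal.ofReal (max ((1/2) * x^2 * exp (-x) - t) 0)
        ≤ ENNReal.ofReal (∫ y in Ici (0:ℝ), max (exp (-y) - t) 0) := by
      calc ∫⁻ x in Ici (0:ℝ), ENNReal.ofReal (max ((1/2) * x^2 * exp (-x) - t) 0)
          ≤ ∫⁻ x in Ici (0:ℝ), ∫⁻ s, w s * v (x - s) := by
            apply lintegral_mono_ae
            filter_upwards [ae_restrict_mem measurableSet_Ici] with x hx
            exact step1 x hx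
        _ ≤ ∫⁻ x, ∫⁻ s, w s * v (x - s) := setLIntegral_le_lintegral _ _
        _ = (∫⁻ s, w s) * ∫⁻ y, v y := swap
        _ = ENNReal.ofReal (∫ y in Ici (0:ℝ), max (exp (-y) - t) 0) := by
            rw [hwint, hvint, one_mul]
    -- convert back to Bochner integrals
    have hmeasL : AEStronglyMeasurable (fun x : ℝ => max ((1/2) * x^2 * exp (-x) - t) 0)
        (volume.restrict (Ici (0:ℝ))) := by
      apply Continuous.aestronglyMeasurable
      exact ((((continuous_const.mul (continuous_pow 2)).mul
        (continuous_exp.comp continuous_neg)).sub continuous_const).max continuous_const)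
    rw [integral_eq_lintegral_of_nonneg_ae
        (by filter_upwards with x; exact le_max_right _ _) hmeasL]
    have := ENNReal.toReal_mono ENNReal.ofReal_ne_top hL
    rw [ENNReal.toReal_ofReal (setIntegral_nonneg measurableSet_Ici
      (fun y _ => le_max_right _ _))] at this
    exact this
  · rw [integral_Ici_eq_integral_Ioi, integral_Ici_eq_integral_Ioi,
      aux_integral_x2exp, integral_exp_neg_Ioi_zero]
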